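/- For every nonnegative integer n and every natural number i ≥ 1, f(2n+1, i) = f(n, i-1) + f(n+1, i-1). -/

import Mathlib

/-- Number of `i`-bit binary signed-digit representations of the integer `n`. -/
noncomputable def numBSD (n : ℤ) (i : ℕ) : ℕ :=
  Nat.card {b : Fin i → ℤ //
    (∀ j, b j = -1 ∨ b j = 0 ∨ b j = 1) ∧ n = ∑ j, b j * 2 ^ (j : ℕ)}

lemma bsd_finite (n : ℤ) (i : ℕ) :
    Finite {b : Fin i → ℤ //
      (∀ j, b j = -1 ∨ b j = 0 ∨ b j = 1) ∧ n = ∑ j, b j * 2 ^ (j : ℕ)} := by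
  have hfin : Finite ({-1, 0, 1} : Set ℤ) := Set.Finite.to_subtype (Set.toFinite _)
  apply Finite.of_injective (fun b : {b : Fin i → ℤ //
      (∀ j, b j = -1 ∨ b j = 0 ∨ b j = 1) ∧ n = ∑ j, b j * 2 ^ (j : ℕ)} =>
    fun j => (⟨b.1 j, by have := b.2.1 j; simp only [Set.mem_insert_iff,
      Set.mem_singleton_iff]; tauto⟩ : ({-1, 0, 1} : Set ℤ)))
  intro a b h
  apply Subtype.ext
  funext j
  have := congrFun h j
  simpa [Subtype.ext_iff] using this

lemma sum_cons_eq (k : ℕ) (a : ℤ) (c : Fin k → ℤ) :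
    ∑ j : Fin (k + 1), (Fin.cons a c : Fin (k+1) → ℤ) j * 2 ^ (j : ℕ)
      = a + (∑ j : Fin k, c j * 2 ^ (j : ℕ)) * 2 := by
  rw [Fin.sum_univ_succ]
  simp only [Fin.cons_zero, Fin.cons_succ, Fin.val_zero, pow_zero, mul_one, Fin.val_succ]
  rw [Finset.sum_mul]
  congr 1
  apply Finset.sum_congr rfl
  intro j _
  ring

theorem bsd_two_mul_add_one (n : ℤ) (hn : 0 ≤ n) (i : ℕ) (hi : 1 ≤ i) :
    numBSD (2 * n + 1) i = numBSD n (i - 1) + numBSD (n + 1) (i - 1) := by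
  obtain ⟨k, rfl⟩ : ∃ k, i = k + 1 := ⟨i - 1, (Nat.succ_pred_eq_of_pos hi).symm⟩
  simp only [Nat.add_sub_cancel]
  have hA := bsd_finite (2 * n + 1) (k + 1)
  have hB := bsd_finite n k
  have hC := bsd_finite (n + 1) k
  unfold numBSD
  rw [← Nat.card_sum]
  set B := {b : Fin k → ℤ //
      (∀ j, b j = -1 ∨ b j = 0 ∨ b j = 1) ∧ n = ∑ j, b j * 2 ^ (j : ℕ)}
  set C := {b : Fin k → ℤ //
      (∀ j, b j = -1 ∨ b j = 0 ∨ b j = 1) ∧ n + 1 = ∑ j, b j * 2 ^ (j : ℕ)}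
  set A := {b : Fin (k+1) → ℤ //
      (∀ j, b j = -1 ∨ b j = 0 ∨ b j = 1) ∧ 2 * n + 1 = ∑ j, b j * 2 ^ (j : ℕ)}
  let g : B ⊕ C → A := fun x =>
    match x with
    | Sum.inl c => ⟨Fin.cons 1 c.1, by
        constructor
        · intro j
          refine Fin.cases ?_ ?_ j
          · simp
          · intro m; simpa using c.2.1 m
        · rw [sum_cons_eq, ← c.2.2]; ring⟩
    | Sum.inr c => ⟨Fin.cons (-1) c.1, by
        constructor
        · intro j
          refine Fin.cases ?_ ?_ j
          · simp
          · intro m; simpa using c.2.1 m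
        · rw [sum_cons_eq, ← c.2.2]; ring⟩
  have hg : Function.Bijective g := by
    constructor
    · rintro (c | c) (d | d) h <;>
        have h' := congrArg Subtype.val h
      · simp only [g] at h'
        exact congrArg Sum.inl (Subtype.ext ((Fin.cons_right_injective _) h'))
      · exact absurd (congrFun h' 0) (by norm_num [g])
      · exact absurd (congrFun h' 0) (by norm_num [g])
      · simp only [g] at h'
        exact congrArg Sum.inr (Subtype.ext ((Fin.cons_right_injective _) h'))
    · rintro ⟨b, hb1, hb2⟩
      have hsum : 2 * n + 1 = b 0 + (∑ j : Fin k, b j.succ * 2 ^ (j : ℕ)) * 2 := by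
        rw [hb2, ← sum_cons_eq k (b 0) (fun j => b j.succ)]
        apply Finset.sum_congr rfl
        intro j _
        congr 1
        exact (congrFun (Fin.cons_self_tail b) j).symm
      rcases hb1 0 with h0 | h0 | h0
      · refine ⟨Sum.inr ⟨Fin.tail b, fun j => hb1 j.succ, by
          simp only [Fin.tail]; omega⟩, ?_⟩
        simp only [g]
        apply Subtype.ext
        show Fin.cons (-1) (Fin.tail b) = b
        rw [← h0]
        exact Fin.cons_self_tail b
      · exfalso; rw [h0] at hsum; omega
      · refine ⟨Sum.inl ⟨Fin.tail b, fun j => hb1 j.succ, by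
          simp only [Fin.tail]; omega⟩, ?_⟩
        simp only [g]
        apply Subtype.ext
        show Fin.cons 1 (Fin.tail b) = b
        rw [← h0]
        exact Fin.cons_self_tail b
  exact (Nat.card_eq_of_bijective g hg).symm
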